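/- Let ℓ̃ be a convex differentiable function on n×D real matrices, A an invertible-like matrix constraint with smallest singular value σ_min(A), and let S, T be matrices with entries bounded by α. Suppose τ₂ ≥ 2‖∇ℓ̃(T)‖ (operator norm) and ℓ̃(S) + τ₂‖S‖_* ≤ ℓ̃(T) − τ₁‖A(S_{[d]} − T_{[d]})‖_F² + τ₂‖T‖_*, where S_{[d]} is the submatrix of the first d columns. Then ‖P_T^⊥(S−T)‖_* ≤ 3‖P_T(S−T)‖_* − (2τ₁/τ₂)σ_min(A)²‖S_{[d]} − T_{[d]}‖_F². -/

import Mathlib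

open Matrix BigOperators MeasureTheory

noncomputable def singVals {m n : ℕ} (S : Matrix (Fin m) (Fin n) ℝ) : Fin n → ℝ :=
  fun i => Real.sqrt (((by simpa [Matrix.conjTranspose_eq_transpose_of_trivial] using Matrix.isHermitian_conjTranspose_mul_self S : (Sᵀ * S).IsHermitian)).eigenvalues i)

noncomputable def opNorm {m n : ℕ} (S : Matrix (Fin m) (Fin n) ℝ) : ℝ := ⨆ i, singVals S i

noncomputable def sMin {m n : ℕ} (S : Matrix (Fin m) (Fin n) ℝ) : ℝ := ⨅ i, singVals S i

noncomputable def nuclearNorm {m n : ℕ} (S : Matrix (Fin m) (Fin n) ℝ) : ℝ := ∑ i, singVals S i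

noncomputable def frob {m n : ℕ} (S : Matrix (Fin m) (Fin n) ℝ) : ℝ :=
  Real.sqrt (∑ i, ∑ j, (S i j) ^ 2)

section AuxLemmas

lemma singVals_eq {a b : ℕ} (M : Matrix (Fin a) (Fin b) ℝ) (i : Fin b) :
    singVals M i = Real.sqrt ((Matrix.isHermitian_conjTranspose_mul_self M).eigenvalues i) :=
  rfl

lemma conj_dot {k : ℕ} (Q : Matrix (Fin k) (Fin k) ℝ) (hQ : Q * Qᵀ = 1)
    (e : Fin k → ℝ) (x : Fin k → ℝ) :
    ∃ y : Fin k → ℝ, x ⬝ᵥ ((Q * diagonal e * Qᵀ) *ᵥ x) = ∑ i, e i * y i ^ 2 ∧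
      x ⬝ᵥ x = ∑ i, y i ^ 2 := by
  refine ⟨Qᵀ *ᵥ x, ?_, ?_⟩
  · rw [← Matrix.mulVec_mulVec, ← Matrix.mulVec_mulVec, dotProduct_mulVec,
      ← Matrix.mulVec_transpose]
    simp only [dotProduct, Matrix.mulVec_diagonal]
    exact Finset.sum_congr rfl fun i _ => by ring
  · have hx : Q *ᵥ (Qᵀ *ᵥ x) = x := by
      rw [Matrix.mulVec_mulVec, hQ, Matrix.one_mulVec]
    have h2 : (Qᵀ *ᵥ x) ⬝ᵥ (Qᵀ *ᵥ x) = x ⬝ᵥ x := by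
      rw [dotProduct_mulVec, Matrix.vecMul_transpose, hx]
    rw [← h2]
    simp only [dotProduct, sq]

lemma unitary_mul_transpose {k : ℕ} {H : Matrix (Fin k) (Fin k) ℝ} (hH : H.IsHermitian) :
    (hH.eigenvectorUnitary : Matrix (Fin k) (Fin k) ℝ) *
      (hH.eigenvectorUnitary : Matrix (Fin k) (Fin k) ℝ)ᵀ = 1 := by
  have h := (Matrix.mem_unitaryGroup_iff).mp hH.eigenvectorUnitary.2
  simpa [Matrix.star_eq_conjTranspose, Matrix.conjTranspose_eq_transpose_of_trivial] using h

lemma transpose_mul_unitary {k : ℕ} {H : Matrix (Fin k) (Fin k) ℝ} (hH : H.IsHermitian) :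
    (hH.eigenvectorUnitary : Matrix (Fin k) (Fin k) ℝ)ᵀ *
      (hH.eigenvectorUnitary : Matrix (Fin k) (Fin k) ℝ) = 1 := by
  have h := (Matrix.mem_unitaryGroup_iff').mp hH.eigenvectorUnitary.2
  simpa [Matrix.star_eq_conjTranspose, Matrix.conjTranspose_eq_transpose_of_trivial] using h

lemma spectral_real {k : ℕ} {H : Matrix (Fin k) (Fin k) ℝ} (hH : H.IsHermitian) :
    H = (hH.eigenvectorUnitary : Matrix (Fin k) (Fin k) ℝ) * diagonal hH.eigenvalues *
      (hH.eigenvectorUnitary : Matrix (Fin k) (Fin k) ℝ)ᵀ := by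
  conv_lhs => rw [hH.spectral_theorem]
  rw [Unitary.conjStarAlgAut_apply, Matrix.star_eq_conjTranspose,
    Matrix.conjTranspose_eq_transpose_of_trivial, RCLike.ofReal_real_eq_id]
  simp

lemma diag_real {k : ℕ} {H : Matrix (Fin k) (Fin k) ℝ} (hH : H.IsHermitian) :
    (hH.eigenvectorUnitary : Matrix (Fin k) (Fin k) ℝ)ᵀ * H *
      (hH.eigenvectorUnitary : Matrix (Fin k) (Fin k) ℝ) = diagonal hH.eigenvalues := by
  have h := congrArg (fun N => (hH.eigenvectorUnitary : Matrix (Fin k) (Fin k) ℝ)ᵀ * N *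
    (hH.eigenvectorUnitary : Matrix (Fin k) (Fin k) ℝ)) (spectral_real hH)
  rw [h]
  simp only [Matrix.mul_assoc, transpose_mul_unitary hH, Matrix.mul_one]
  rw [← Matrix.mul_assoc, transpose_mul_unitary hH, Matrix.one_mul]

namespace Matrix.PosSemidef

noncomputable def sqrt {k : ℕ} {A : Matrix (Fin k) (Fin k) ℝ} (hA : A.PosSemidef) :
    Matrix (Fin k) (Fin k) ℝ :=
  (hA.1.eigenvectorUnitary : Matrix (Fin k) (Fin k) ℝ) *
    diagonal (RCLike.ofReal ∘ Real.sqrt ∘ hA.1.eigenvalues) *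
    (star (hA.1.eigenvectorUnitary : Matrix (Fin k) (Fin k) ℝ))

open scoped MatrixOrder in
lemma sqrt_eq_cfcSqrt {k : ℕ} {A : Matrix (Fin k) (Fin k) ℝ} (hA : A.PosSemidef) :
    hA.sqrt = CFC.sqrt A := by
  rw [CFC.sqrt_eq_cfc, cfc_nnreal_eq_real _ A (Matrix.nonneg_iff_posSemidef.mpr hA),
    hA.1.cfc_eq]
  simp only [Matrix.IsHermitian.cfc, Unitary.conjStarAlgAut_apply, sqrt]
  rw [show (fun x : ℝ => ((NNReal.sqrt x.toNNReal : NNReal) : ℝ)) = Real.sqrt from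
    funext fun x => (Real.sqrt.eq_1 x).symm]

open scoped MatrixOrder in
lemma posSemidef_sqrt {k : ℕ} {A : Matrix (Fin k) (Fin k) ℝ} (hA : A.PosSemidef) :
    hA.sqrt.PosSemidef := by
  rw [sqrt_eq_cfcSqrt]
  exact Matrix.nonneg_iff_posSemidef.mp (CFC.sqrt_nonneg A)

open scoped MatrixOrder in
lemma sqrt_mul_self {k : ℕ} {A : Matrix (Fin k) (Fin k) ℝ} (hA : A.PosSemidef) :
    hA.sqrt * hA.sqrt = A := by
  rw [sqrt_eq_cfcSqrt]
  exact CFC.sqrt_mul_sqrt_self A (Matrix.nonneg_iff_posSemidef.mpr hA)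

open scoped MatrixOrder in
lemma eq_sqrt_of_sq_eq {k : ℕ} {B : Matrix (Fin k) (Fin k) ℝ} (hB : B.PosSemidef)
    {A : Matrix (Fin k) (Fin k) ℝ} (hA : A.PosSemidef) (hBA : B ^ 2 = A) : B = hA.sqrt := by
  rw [sqrt_eq_cfcSqrt]
  exact (CFC.sqrt_unique (by rw [← sq]; exact hBA) (Matrix.nonneg_iff_posSemidef.mpr hB)).symm

end Matrix.PosSemidef

lemma rayleigh {k : ℕ} {H : Matrix (Fin k) (Fin k) ℝ} (hH : H.IsHermitian) (x : Fin k → ℝ) :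
    ∃ y : Fin k → ℝ, x ⬝ᵥ (H *ᵥ x) = ∑ i, hH.eigenvalues i * y i ^ 2 ∧
      x ⬝ᵥ x = ∑ i, y i ^ 2 := by
  have h := conj_dot _ (unitary_mul_transpose hH) hH.eigenvalues x
  rwa [← spectral_real hH] at h

lemma ct_eq {a b : ℕ} (M : Matrix (Fin a) (Fin b) ℝ) : Mᴴ = Mᵀ :=
  Matrix.conjTranspose_eq_transpose_of_trivial M

lemma gram_eq {a b : ℕ} (M : Matrix (Fin a) (Fin b) ℝ) :
    Mᵀ * M = Mᴴ * M := by rw [ct_eq]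

lemma sq_singVals {a b : ℕ} (M : Matrix (Fin a) (Fin b) ℝ) (i : Fin b) :
    singVals M i ^ 2 = (Matrix.isHermitian_conjTranspose_mul_self M).eigenvalues i :=
  Real.sq_sqrt (Matrix.eigenvalues_conjTranspose_mul_self_nonneg M i)

lemma singVals_nonneg {a b : ℕ} (M : Matrix (Fin a) (Fin b) ℝ) (i : Fin b) :
    0 ≤ singVals M i := Real.sqrt_nonneg _

lemma opNorm_nonneg {a b : ℕ} (M : Matrix (Fin a) (Fin b) ℝ) : 0 ≤ opNorm M :=
  Real.iSup_nonneg (singVals_nonneg M)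

lemma sMin_nonneg {a b : ℕ} (M : Matrix (Fin a) (Fin b) ℝ) : 0 ≤ sMin M :=
  Real.iInf_nonneg (singVals_nonneg M)

lemma nuclearNorm_nonneg {a b : ℕ} (M : Matrix (Fin a) (Fin b) ℝ) : 0 ≤ nuclearNorm M :=
  Finset.sum_nonneg fun i _ => singVals_nonneg M i

lemma singVals_le_opNorm {a b : ℕ} (M : Matrix (Fin a) (Fin b) ℝ) (i : Fin b) :
    singVals M i ≤ opNorm M :=
  le_ciSup (Set.Finite.bddAbove (Set.finite_range _)) i

lemma sMin_le_singVals {a b : ℕ} (M : Matrix (Fin a) (Fin b) ℝ) (i : Fin b) :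
    sMin M ≤ singVals M i :=
  ciInf_le (Set.Finite.bddBelow (Set.finite_range _)) i

lemma mulVec_dot_self {a b : ℕ} (M : Matrix (Fin a) (Fin b) ℝ) (v : Fin b → ℝ) :
    (M *ᵥ v) ⬝ᵥ (M *ᵥ v) = v ⬝ᵥ ((Mᵀ * M) *ᵥ v) := by
  rw [← Matrix.mulVec_mulVec, dotProduct_mulVec, dotProduct_mulVec,
    Matrix.vecMul_transpose, ← dotProduct_mulVec]

lemma mulVec_sq_le {a b : ℕ} (M : Matrix (Fin a) (Fin b) ℝ) (v : Fin b → ℝ) :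
    (M *ᵥ v) ⬝ᵥ (M *ᵥ v) ≤ opNorm M ^ 2 * (v ⬝ᵥ v) := by
  rw [mulVec_dot_self, gram_eq]
  obtain ⟨y, h1, h2⟩ := rayleigh (Matrix.isHermitian_conjTranspose_mul_self M) v
  rw [h1, h2, Finset.mul_sum]
  refine Finset.sum_le_sum fun i _ => ?_
  have h3 : (Matrix.isHermitian_conjTranspose_mul_self M).eigenvalues i ≤ opNorm M ^ 2 := by
    rw [← sq_singVals]
    exact pow_le_pow_left₀ (singVals_nonneg M i) (singVals_le_opNorm M i) 2
  exact mul_le_mul_of_nonneg_right h3 (sq_nonneg _)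

lemma sMin_mulVec_le {a b : ℕ} (M : Matrix (Fin a) (Fin b) ℝ) (v : Fin b → ℝ) :
    sMin M ^ 2 * (v ⬝ᵥ v) ≤ (M *ᵥ v) ⬝ᵥ (M *ᵥ v) := by
  rw [mulVec_dot_self, gram_eq]
  obtain ⟨y, h1, h2⟩ := rayleigh (Matrix.isHermitian_conjTranspose_mul_self M) v
  rw [h1, h2, Finset.mul_sum]
  refine Finset.sum_le_sum fun i _ => ?_
  have h3 : sMin M ^ 2 ≤ (Matrix.isHermitian_conjTranspose_mul_self M).eigenvalues i := by
    rw [← sq_singVals]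
    exact pow_le_pow_left₀ (sMin_nonneg M) (sMin_le_singVals M i) 2
  exact mul_le_mul_of_nonneg_right h3 (sq_nonneg _)

lemma frob_sq {a b : ℕ} (M : Matrix (Fin a) (Fin b) ℝ) :
    frob M ^ 2 = ∑ i, ∑ j, M i j ^ 2 :=
  Real.sq_sqrt (by positivity)

lemma frob_bound {p n d : ℕ} (A : Matrix (Fin p) (Fin n) ℝ) (X : Matrix (Fin n) (Fin d) ℝ) :
    sMin A ^ 2 * frob X ^ 2 ≤ frob (A * X) ^ 2 := by
  rw [frob_sq, frob_sq]
  have hL : ∑ i, ∑ j, X i j ^ 2 = ∑ j, (fun k => X k j) ⬝ᵥ (fun k => X k j) := by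
    rw [Finset.sum_comm]
    exact Finset.sum_congr rfl fun j _ => by simp [dotProduct, sq]
  have hR : ∑ i, ∑ j, (A * X) i j ^ 2
      = ∑ j, (A *ᵥ fun k => X k j) ⬝ᵥ (A *ᵥ fun k => X k j) := by
    rw [Finset.sum_comm]
    refine Finset.sum_congr rfl fun j _ => ?_
    simp [dotProduct, Matrix.mulVec, Matrix.mul_apply, sq]
  rw [hL, hR, Finset.mul_sum]
  exact Finset.sum_le_sum fun j _ => sMin_mulVec_le A _

lemma abs_trace_le {a b : ℕ} (G M : Matrix (Fin a) (Fin b) ℝ) :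
    |Matrix.trace (Gᵀ * M)| ≤ opNorm G * nuclearNorm M := by
  set hH := Matrix.isHermitian_conjTranspose_mul_self M with hHdef
  set Q : Matrix (Fin b) (Fin b) ℝ := (hH.eigenvectorUnitary : Matrix (Fin b) (Fin b) ℝ) with hQdef
  have hQQt : Q * Qᵀ = 1 := unitary_mul_transpose hH
  have hQtQ : Qᵀ * Q = 1 := transpose_mul_unitary hH
  have h1 : Matrix.trace (Gᵀ * M) = Matrix.trace ((G * Q)ᵀ * (M * Q)) := by
    have e1 : (G * Q)ᵀ * (M * Q) = Qᵀ * (Gᵀ * M * Q) := by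
      rw [Matrix.transpose_mul]; simp only [Matrix.mul_assoc]
    have e2 : Matrix.trace ((G * Q)ᵀ * (M * Q)) = Matrix.trace ((Gᵀ * M * Q) * Qᵀ) := by
      rw [e1, Matrix.trace_mul_comm]
    have e3 : (Gᵀ * M * Q) * Qᵀ = (Gᵀ * M) * (Q * Qᵀ) := by
      simp only [Matrix.mul_assoc]
    rw [e2, e3, hQQt, Matrix.mul_one]
  have h2 : Matrix.trace ((G * Q)ᵀ * (M * Q)) = ∑ j, ∑ i, (G * Q) i j * (M * Q) i j := by
    simp [Matrix.trace, Matrix.diag, Matrix.mul_apply, mul_comm]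
  have hcolM : ∀ j, ∑ i, (M * Q) i j ^ 2 = hH.eigenvalues j := by
    intro j
    have h3 : (M * Q)ᵀ * (M * Q) = diagonal hH.eigenvalues := by
      rw [Matrix.transpose_mul]
      rw [show Qᵀ * Mᵀ * (M * Q) = Qᵀ * (Mᵀ * M) * Q by simp only [Matrix.mul_assoc]]
      rw [gram_eq, diag_real]
    have h4 := congrArg (fun N => N j j) h3
    simpa [Matrix.mul_apply, sq, mul_comm] using h4
  have hcolG : ∀ j, ∑ i, (G * Q) i j ^ 2 ≤ opNorm G ^ 2 := by
    intro j
    have h5 : ∑ i, (G * Q) i j ^ 2 = (G *ᵥ fun k => Q k j) ⬝ᵥ (G *ᵥ fun k => Q k j) := by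
      simp [dotProduct, Matrix.mulVec, Matrix.mul_apply, sq]
    have h6 : (fun k => Q k j) ⬝ᵥ (fun k => Q k j) = 1 := by
      have h7 := congrArg (fun N => N j j) hQtQ
      simpa [Matrix.mul_apply, dotProduct] using h7
    calc ∑ i, (G * Q) i j ^ 2 = (G *ᵥ fun k => Q k j) ⬝ᵥ (G *ᵥ fun k => Q k j) := h5
      _ ≤ opNorm G ^ 2 * ((fun k => Q k j) ⬝ᵥ (fun k => Q k j)) := mulVec_sq_le G _
      _ = opNorm G ^ 2 := by rw [h6, mul_one]
  rw [h1, h2]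
  calc |∑ j, ∑ i, (G * Q) i j * (M * Q) i j|
      ≤ ∑ j, |∑ i, (G * Q) i j * (M * Q) i j| := Finset.abs_sum_le_sum_abs _ _
    _ ≤ ∑ j, opNorm G * singVals M j := by
        refine Finset.sum_le_sum fun j _ => ?_
        have hcs := Real.sum_mul_le_sqrt_mul_sqrt Finset.univ
          (fun i => (G * Q) i j) (fun i => (M * Q) i j)
        have hcs' := Real.sum_mul_le_sqrt_mul_sqrt Finset.univ
          (fun i => -((G * Q) i j)) (fun i => (M * Q) i j)
        simp only [neg_mul, Finset.sum_neg_distrib, neg_sq] at hcs'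
        have hb : Real.sqrt (∑ i, (G * Q) i j ^ 2) * Real.sqrt (∑ i, (M * Q) i j ^ 2)
            ≤ opNorm G * singVals M j := by
          have hsv : singVals M j = Real.sqrt (hH.eigenvalues j) := rfl
          rw [hcolM j, ← hsv]
          refine mul_le_mul_of_nonneg_right ?_ (by rw [hsv]; exact Real.sqrt_nonneg _)
          calc Real.sqrt (∑ i, (G * Q) i j ^ 2) ≤ Real.sqrt (opNorm G ^ 2) :=
                Real.sqrt_le_sqrt (hcolG j)
            _ = opNorm G := Real.sqrt_sq (opNorm_nonneg G)
        exact abs_le.mpr ⟨by linarith, le_trans hcs hb⟩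
    _ = opNorm G * nuclearNorm M := by rw [nuclearNorm, Finset.mul_sum]

lemma eig_congr {k : ℕ} {A B : Matrix (Fin k) (Fin k) ℝ} (hA : A.IsHermitian)
    (hB : B.IsHermitian) (h : A = B) : hA.eigenvalues = hB.eigenvalues := by
  subst h; rfl

lemma sqrt_congr {k : ℕ} {A B : Matrix (Fin k) (Fin k) ℝ} (h : A = B) (hA : A.PosSemidef)
    (hB : B.PosSemidef) : hA.sqrt = hB.sqrt := by
  subst h; rfl

lemma nuclearNorm_neg {a b : ℕ} (X : Matrix (Fin a) (Fin b) ℝ) :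
    nuclearNorm (-X) = nuclearNorm X := by
  unfold nuclearNorm; simp only [singVals_eq]
  rw [eig_congr (Matrix.isHermitian_conjTranspose_mul_self (-X))
    (Matrix.isHermitian_conjTranspose_mul_self X) (by simp)]

lemma nuclearNorm_eq_trace_sqrt {a b : ℕ} (M : Matrix (Fin a) (Fin b) ℝ) :
    nuclearNorm M = ((Matrix.posSemidef_conjTranspose_mul_self M).sqrt).trace := by
  set hH := Matrix.isHermitian_conjTranspose_mul_self M
  have h1 : (Matrix.posSemidef_conjTranspose_mul_self M).sqrt =
      (hH.eigenvectorUnitary : Matrix (Fin b) (Fin b) ℝ) *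
        diagonal ((↑) ∘ Real.sqrt ∘ hH.eigenvalues) *
        (star (hH.eigenvectorUnitary : Matrix (Fin b) (Fin b) ℝ)) := rfl
  rw [h1, Matrix.star_eq_conjTranspose,
    show ((hH.eigenvectorUnitary : Matrix (Fin b) (Fin b) ℝ))ᴴ =
      ((hH.eigenvectorUnitary : Matrix (Fin b) (Fin b) ℝ))ᵀ from ct_eq _]
  rw [Matrix.trace_mul_cycle]
  rw [transpose_mul_unitary hH, Matrix.one_mul, Matrix.trace_diagonal]
  unfold nuclearNorm singVals
  simp [RCLike.ofReal_real_eq_id]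

lemma trace_transpose_mul_self_eq_zero {a b : ℕ} {M : Matrix (Fin a) (Fin b) ℝ}
    (h : Matrix.trace (Mᵀ * M) = 0) : M = 0 := by
  have hsum : ∑ j, ∑ i, M i j ^ 2 = 0 := by
    simpa [Matrix.trace, Matrix.diag, Matrix.mul_apply, sq, mul_comm] using h
  ext i j
  have h1 := (Finset.sum_eq_zero_iff_of_nonneg (fun j' _ =>
    Finset.sum_nonneg fun i' _ => sq_nonneg (M i' j'))).mp hsum j (Finset.mem_univ j)
  have h2 := (Finset.sum_eq_zero_iff_of_nonneg (fun i' _ => sq_nonneg (M i' j))).mp h1 i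
    (Finset.mem_univ i)
  simpa using pow_eq_zero_iff (n := 2) (by norm_num) |>.mp h2

lemma sqrt_mul_sqrt_eq_zero {k : ℕ} {P Q : Matrix (Fin k) (Fin k) ℝ} (hP : P.PosSemidef)
    (hQ : Q.PosSemidef) (h : P * Q = 0) : hP.sqrt * hQ.sqrt = 0 := by
  have hPs : hP.sqrtᵀ = hP.sqrt := by
    have h1 := hP.posSemidef_sqrt.1
    rwa [Matrix.IsHermitian, ct_eq] at h1
  have hQs : hQ.sqrtᵀ = hQ.sqrt := by
    have h1 := hQ.posSemidef_sqrt.1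
    rwa [Matrix.IsHermitian, ct_eq] at h1
  have hQP : Q * P = 0 := by
    have h1 := congrArg Matrix.transpose h
    rw [Matrix.transpose_mul, Matrix.transpose_zero] at h1
    have hPt : Pᵀ = P := by have := hP.1; rwa [Matrix.IsHermitian, ct_eq] at this
    have hQt : Qᵀ = Q := by have := hQ.1; rwa [Matrix.IsHermitian, ct_eq] at this
    rwa [hPt, hQt] at h1
  apply trace_transpose_mul_self_eq_zero
  have h2 : (hP.sqrt * hQ.sqrt)ᵀ * (hP.sqrt * hQ.sqrt) = hQ.sqrt * (P * hQ.sqrt) := by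
    rw [Matrix.transpose_mul, hPs, hQs, Matrix.mul_assoc, ← Matrix.mul_assoc hP.sqrt,
      hP.sqrt_mul_self]
  rw [h2, ← Matrix.mul_assoc, Matrix.trace_mul_cycle, hQ.sqrt_mul_self, hQP,
    Matrix.trace_zero]

lemma nuclearNorm_add_orth {a b : ℕ} (X Y : Matrix (Fin a) (Fin b) ℝ)
    (h1 : Xᵀ * Y = 0) (h2 : X * Yᵀ = 0) :
    nuclearNorm (X + Y) = nuclearNorm X + nuclearNorm Y := by
  have hP := Matrix.posSemidef_conjTranspose_mul_self X
  have hQ := Matrix.posSemidef_conjTranspose_mul_self Y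
  have hPQ : (Xᴴ * X) * (Yᴴ * Y) = 0 := by
    rw [ct_eq, ct_eq]
    calc Xᵀ * X * (Yᵀ * Y) = Xᵀ * ((X * Yᵀ) * Y) := by simp only [Matrix.mul_assoc]
      _ = 0 := by rw [h2, Matrix.zero_mul, Matrix.mul_zero]
  have hG : (X + Y)ᴴ * (X + Y) = Xᴴ * X + Yᴴ * Y := by
    have h1' : Yᵀ * X = 0 := by
      have := congrArg Matrix.transpose h1
      rwa [Matrix.transpose_mul, Matrix.transpose_transpose, Matrix.transpose_zero] at this
    rw [ct_eq, ct_eq, ct_eq, Matrix.transpose_add, Matrix.add_mul, Matrix.mul_add,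
      Matrix.mul_add, h1, h1']
    abel
  have hs : hP.sqrt * hQ.sqrt = 0 := sqrt_mul_sqrt_eq_zero hP hQ hPQ
  have hs' : hQ.sqrt * hP.sqrt = 0 := by
    have hPs : hP.sqrtᵀ = hP.sqrt := by
      have := hP.posSemidef_sqrt.1; rwa [Matrix.IsHermitian, ct_eq] at this
    have hQs : hQ.sqrtᵀ = hQ.sqrt := by
      have := hQ.posSemidef_sqrt.1; rwa [Matrix.IsHermitian, ct_eq] at this
    have := congrArg Matrix.transpose hs
    rwa [Matrix.transpose_mul, hPs, hQs, Matrix.transpose_zero] at this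
  have hPQsum : (Xᴴ * X + Yᴴ * Y).PosSemidef := hP.add hQ
  have hsq : (hP.sqrt + hQ.sqrt) ^ 2 = Xᴴ * X + Yᴴ * Y := by
    rw [sq, Matrix.add_mul, Matrix.mul_add, Matrix.mul_add, hP.sqrt_mul_self,
      hQ.sqrt_mul_self, hs, hs']
    abel
  have heq : hP.sqrt + hQ.sqrt = hPQsum.sqrt :=
    (hP.posSemidef_sqrt.add hQ.posSemidef_sqrt).eq_sqrt_of_sq_eq hPQsum hsq
  rw [nuclearNorm_eq_trace_sqrt, nuclearNorm_eq_trace_sqrt, nuclearNorm_eq_trace_sqrt,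
    sqrt_congr hG (Matrix.posSemidef_conjTranspose_mul_self (X + Y)) hPQsum, ← heq,
    Matrix.trace_add]

lemma eig_rayleigh {k : ℕ} {N : Matrix (Fin k) (Fin k) ℝ} (hN : N.IsHermitian) (i : Fin k) :
    hN.eigenvalues i = (⇑(hN.eigenvectorBasis i)) ⬝ᵥ (N *ᵥ ⇑(hN.eigenvectorBasis i)) := by
  have h := hN.eigenvalues_eq i
  simpa using h

lemma eigvec_dot_one {k : ℕ} {N : Matrix (Fin k) (Fin k) ℝ} (hN : N.IsHermitian) (i : Fin k) :
    (⇑(hN.eigenvectorBasis i)) ⬝ᵥ (⇑(hN.eigenvectorBasis i)) = 1 := by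
  have hnorm : ‖hN.eigenvectorBasis i‖ = 1 := hN.eigenvectorBasis.orthonormal.1 i
  rw [EuclideanSpace.norm_eq] at hnorm
  have h2 : ∑ j, ‖hN.eigenvectorBasis i j‖ ^ 2 = 1 := by
    have := congrArg (fun t : ℝ => t ^ 2) hnorm
    simpa [Real.sq_sqrt (Finset.sum_nonneg fun j _ => sq_nonneg _)] using this
  simp only [dotProduct]
  calc ∑ j, (hN.eigenvectorBasis i) j * (hN.eigenvectorBasis i) j
      = ∑ j, ‖hN.eigenvectorBasis i j‖ ^ 2 := by
        refine Finset.sum_congr rfl fun j _ => ?_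
        rw [Real.norm_eq_abs, sq_abs, sq]
    _ = 1 := h2

lemma exists_dual {a b : ℕ} (X : Matrix (Fin a) (Fin b) ℝ) :
    ∃ B : Matrix (Fin a) (Fin b) ℝ, opNorm B ≤ 1 ∧
      Matrix.trace (Bᵀ * X) = nuclearNorm X := by
  set hH := Matrix.isHermitian_conjTranspose_mul_self X with hHdef
  set Q : Matrix (Fin b) (Fin b) ℝ := (hH.eigenvectorUnitary : Matrix (Fin b) (Fin b) ℝ)
    with hQdef
  have hQQt : Q * Qᵀ = 1 := unitary_mul_transpose hH
  have hdiag : Qᵀ * (Xᵀ * X) * Q = diagonal hH.eigenvalues := by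
    rw [show Xᵀ * X = Xᴴ * X from by rw [ct_eq]]
    exact diag_real hH
  set g : Fin b → ℝ := fun i =>
    if hH.eigenvalues i = 0 then 0 else (Real.sqrt (hH.eigenvalues i))⁻¹ with hgdef
  set B : Matrix (Fin a) (Fin b) ℝ := X * (Q * diagonal g * Qᵀ) with hBdef
  have hBtB : Bᵀ * B = Q * diagonal (fun i => g i * hH.eigenvalues i * g i) * Qᵀ := by
    have h1 : Bᵀ * B = (Q * diagonal g) * (Qᵀ * (Xᵀ * X) * Q) * (diagonal g * Qᵀ) := by
      rw [hBdef]
      simp only [Matrix.transpose_mul, Matrix.diagonal_transpose, Matrix.transpose_transpose,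
        Matrix.mul_assoc]
    rw [h1, hdiag]
    rw [show Q * diagonal g * diagonal hH.eigenvalues * (diagonal g * Qᵀ)
        = Q * (diagonal g * diagonal hH.eigenvalues * diagonal g) * Qᵀ from by
      simp only [Matrix.mul_assoc], Matrix.diagonal_mul_diagonal,
      Matrix.diagonal_mul_diagonal]
  have hEig : ∀ i, hH.eigenvalues i ≥ 0 := fun i =>
    Matrix.eigenvalues_conjTranspose_mul_self_nonneg X i
  have hele : ∀ i, g i * hH.eigenvalues i * g i ≤ 1 := by
    intro i
    by_cases h : hH.eigenvalues i = 0
    · rw [h, mul_zero, zero_mul]; norm_num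
    · have hpos : 0 < hH.eigenvalues i := lt_of_le_of_ne (hEig i) (Ne.symm h)
      have hs : Real.sqrt (hH.eigenvalues i) ≠ 0 := by
        rw [Real.sqrt_ne_zero (le_of_lt hpos)]; exact h
      simp only [hgdef, if_neg h]
      rw [show (Real.sqrt (hH.eigenvalues i))⁻¹ * hH.eigenvalues i *
          (Real.sqrt (hH.eigenvalues i))⁻¹ = hH.eigenvalues i /
          (Real.sqrt (hH.eigenvalues i) * Real.sqrt (hH.eigenvalues i)) by ring]
      rw [Real.mul_self_sqrt (le_of_lt hpos), div_self h]
  refine ⟨B, ?_, ?_⟩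
  · -- opNorm B ≤ 1
    rcases Nat.eq_zero_or_pos b with hb | hb
    · subst hb
      have h0 : opNorm B = 0 := Real.iSup_of_isEmpty _
      rw [h0]; norm_num
    · have : Nonempty (Fin b) := ⟨⟨0, hb⟩⟩
      refine ciSup_le fun i => ?_
      rw [singVals_eq]
      set hB := Matrix.isHermitian_conjTranspose_mul_self B
      refine Real.sqrt_le_one.mpr ?_
      have h3 : hB.eigenvalues i =
          (⇑(hB.eigenvectorBasis i)) ⬝ᵥ ((Bᴴ * B) *ᵥ ⇑(hB.eigenvectorBasis i)) :=
        eig_rayleigh hB i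
      have heq : Bᴴ * B = Q * diagonal (fun i => g i * hH.eigenvalues i * g i) * Qᵀ := by
        rw [ct_eq]; exact hBtB
      have hcong := congrArg
        (fun N => (⇑(hB.eigenvectorBasis i)) ⬝ᵥ (N *ᵥ ⇑(hB.eigenvectorBasis i))) heq
      obtain ⟨y, hy1, hy2⟩ := conj_dot Q hQQt (fun i => g i * hH.eigenvalues i * g i)
        (⇑(hB.eigenvectorBasis i))
      simp only [] at hcong
      rw [h3, hcong, hy1]
      have h4 : ∑ j, (g j * hH.eigenvalues j * g j) * y j ^ 2 ≤ ∑ j, y j ^ 2 :=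
        Finset.sum_le_sum fun j _ => by
          have := mul_le_mul_of_nonneg_right (hele j) (sq_nonneg (y j))
          simpa using this
      calc ∑ j, (g j * hH.eigenvalues j * g j) * y j ^ 2 ≤ ∑ j, y j ^ 2 := h4
        _ = 1 := by rw [← hy2, eigvec_dot_one]
  · -- trace
    have h1 : Bᵀ * X = (Q * diagonal g) * (Qᵀ * (Xᵀ * X)) := by
      rw [hBdef]
      simp only [Matrix.transpose_mul, Matrix.diagonal_transpose, Matrix.transpose_transpose,
        Matrix.mul_assoc]
    have h2 : Matrix.trace (Bᵀ * X) = Matrix.trace (diagonal g * (Qᵀ * (Xᵀ * X) * Q)) := by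
      rw [h1]
      rw [show Q * diagonal g * (Qᵀ * (Xᵀ * X)) = Q * (diagonal g * (Qᵀ * (Xᵀ * X))) from by
        simp only [Matrix.mul_assoc]]
      rw [Matrix.trace_mul_comm]
      rw [show diagonal g * (Qᵀ * (Xᵀ * X)) * Q = diagonal g * (Qᵀ * (Xᵀ * X) * Q) from by
        simp only [Matrix.mul_assoc]]
    rw [h2, hdiag]
    have h5 : Matrix.trace (diagonal g * diagonal hH.eigenvalues)
        = ∑ i, g i * hH.eigenvalues i := by
      rw [Matrix.diagonal_mul_diagonal, Matrix.trace_diagonal]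
    rw [h5]
    unfold nuclearNorm; simp only [singVals_eq]
    refine Finset.sum_congr rfl fun i _ => ?_
    by_cases h : hH.eigenvalues i = 0
    · exact (by rw [h, mul_zero] : g i * hH.eigenvalues i = 0).trans
        (Real.sqrt_eq_zero'.mpr (le_of_eq h)).symm
    · have hpos : 0 < hH.eigenvalues i := lt_of_le_of_ne (hEig i) (Ne.symm h)
      have hs : Real.sqrt (hH.eigenvalues i) ≠ 0 := by
        rw [Real.sqrt_ne_zero (le_of_lt hpos)]; exact h
      simp only [hgdef, if_neg h]
      rw [inv_mul_eq_div, eq_comm, eq_div_iff hs, Real.mul_self_sqrt (le_of_lt hpos)]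

lemma nuclearNorm_triangle {a b : ℕ} (X Y : Matrix (Fin a) (Fin b) ℝ) :
    nuclearNorm (X + Y) ≤ nuclearNorm X + nuclearNorm Y := by
  obtain ⟨B, hB1, hB2⟩ := exists_dual (X + Y)
  rw [← hB2, Matrix.mul_add, Matrix.trace_add]
  have t1 : Matrix.trace (Bᵀ * X) ≤ nuclearNorm X :=
    le_trans (le_abs_self _) (le_trans (abs_trace_le B X)
      (mul_le_of_le_one_left (nuclearNorm_nonneg X) hB1))
  have t2 : Matrix.trace (Bᵀ * Y) ≤ nuclearNorm Y :=
    le_trans (le_abs_self _) (le_trans (abs_trace_le B Y)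
      (mul_le_of_le_one_left (nuclearNorm_nonneg Y) hB1))
  linarith

end AuxLemmas

set_option maxHeartbeats 1000000 in
/-- Lemma 3 (part 1): under the optimality inequality with calibration penalty,
    ‖P_T^⊥(S−T)‖_* ≤ 3‖P_T(S−T)‖_* − (2τ₁/τ₂)σ_min(A)²‖S_{[d]} − T_{[d]}‖_F².
    The SVD of T is given by U Σ Vᵀ with orthonormal columns, so that
    P_T^⊥(M) = (I − UUᵀ) M (I − VVᵀ) and P_T(M) = M − P_T^⊥(M). -/
theorem nuclear_perp_bound {n D d p r : ℕ} (hd : d ≤ D)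
    (ℓ : Matrix (Fin n) (Fin D) ℝ → ℝ) (G : Matrix (Fin n) (Fin D) ℝ)
    (S T : Matrix (Fin n) (Fin D) ℝ)
    (U : Matrix (Fin n) (Fin r) ℝ) (V : Matrix (Fin D) (Fin r) ℝ)
    (Sig : Matrix (Fin r) (Fin r) ℝ)
    (hU : Uᵀ * U = 1) (hV : Vᵀ * V = 1) (hsvd : T = U * Sig * Vᵀ)
    (A : Matrix (Fin p) (Fin n) ℝ) (α τ₁ τ₂ : ℝ)
    (hα : 0 ≤ α) (hτ₁ : 0 ≤ τ₁) (hτ₂pos : 0 < τ₂)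
    (hSα : ∀ i j, |S i j| ≤ α) (hTα : ∀ i j, |T i j| ≤ α)
    -- G = ∇ℓ̃(T) together with convexity of ℓ̃ (subgradient inequality)
    (hgrad : ∀ M, ℓ T + Matrix.trace (Gᵀ * (M - T)) ≤ ℓ M)
    (hτ₂ : 2 * opNorm G ≤ τ₂)
    (hmain : ℓ S + τ₂ * nuclearNorm S ≤
      ℓ T - τ₁ * frob (A * (S.submatrix id (Fin.castLE hd)
        - T.submatrix id (Fin.castLE hd))) ^ 2 + τ₂ * nuclearNorm T) :
    nuclearNorm ((1 - U * Uᵀ) * (S - T) * (1 - V * Vᵀ)) ≤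
      3 * nuclearNorm ((S - T) - (1 - U * Uᵀ) * (S - T) * (1 - V * Vᵀ))
        - 2 * τ₁ / τ₂ * sMin A ^ 2 *
          frob (S.submatrix id (Fin.castLE hd) - T.submatrix id (Fin.castLE hd)) ^ 2 := by
  set Dd : Matrix (Fin n) (Fin d) ℝ :=
    S.submatrix id (Fin.castLE hd) - T.submatrix id (Fin.castLE hd) with hDd
  set Pp : Matrix (Fin n) (Fin D) ℝ := (1 - U * Uᵀ) * (S - T) * (1 - V * Vᵀ) with hPpdef
  set Pt : Matrix (Fin n) (Fin D) ℝ := (S - T) - Pp with hPtdef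
  -- orthogonality of T and Pp
  have hUo : Uᵀ * (1 - U * Uᵀ) = 0 := by
    rw [Matrix.mul_sub, Matrix.mul_one, ← Matrix.mul_assoc, hU, Matrix.one_mul, sub_self]
  have hVo : Vᵀ * (1 - V * Vᵀ) = 0 := by
    rw [Matrix.mul_sub, Matrix.mul_one, ← Matrix.mul_assoc, hV, Matrix.one_mul, sub_self]
  have hUPp : Uᵀ * Pp = 0 := by
    have e : Uᵀ * Pp = (Uᵀ * (1 - U * Uᵀ)) * ((S - T) * (1 - V * Vᵀ)) := by
      rw [hPpdef]; simp only [Matrix.mul_assoc]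
    rw [e, hUo, Matrix.zero_mul]
  have hTPp : Tᵀ * Pp = 0 := by
    have hTt : Tᵀ = V * (Sigᵀ * Uᵀ) := by
      rw [hsvd]
      simp only [Matrix.transpose_mul, Matrix.transpose_transpose, Matrix.mul_assoc]
    have e : Tᵀ * Pp = V * (Sigᵀ * (Uᵀ * Pp)) := by
      rw [hTt]; simp only [Matrix.mul_assoc]
    rw [e, hUPp, Matrix.mul_zero, Matrix.mul_zero]
  have hVPpt : Vᵀ * Ppᵀ = 0 := by
    have e : Vᵀ * Ppᵀ = (Vᵀ * (1 - V * Vᵀ)) * ((S - T)ᵀ * (1 - U * Uᵀ)) := by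
      rw [hPpdef]
      simp only [Matrix.transpose_mul, Matrix.transpose_sub, Matrix.transpose_one,
        Matrix.transpose_transpose, Matrix.mul_assoc]
    rw [e, hVo, Matrix.zero_mul]
  have hTPpt : T * Ppᵀ = 0 := by
    have hT : T = U * (Sig * Vᵀ) := by rw [hsvd, Matrix.mul_assoc]
    have e : T * Ppᵀ = U * (Sig * (Vᵀ * Ppᵀ)) := by
      conv_lhs => rw [hT]
      simp only [Matrix.mul_assoc]
    rw [e, hVPpt, Matrix.mul_zero, Matrix.mul_zero]
  have hadd : nuclearNorm (T + Pp) = nuclearNorm T + nuclearNorm Pp :=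
    nuclearNorm_add_orth T Pp hTPp hTPpt
  have hdecomp : T + Pp = S + -Pt := by rw [hPtdef]; abel
  have htri : nuclearNorm (T + Pp) ≤ nuclearNorm S + nuclearNorm Pt := by
    calc nuclearNorm (T + Pp) = nuclearNorm (S + -Pt) := by rw [hdecomp]
      _ ≤ nuclearNorm S + nuclearNorm (-Pt) := nuclearNorm_triangle S (-Pt)
      _ = nuclearNorm S + nuclearNorm Pt := by rw [nuclearNorm_neg]
  have key1 : nuclearNorm T + nuclearNorm Pp - nuclearNorm Pt ≤ nuclearNorm S := by
    linarith
  have hgradS := hgrad S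
  have htr : Matrix.trace (Gᵀ * (S - T)) = Matrix.trace (Gᵀ * Pt) + Matrix.trace (Gᵀ * Pp) := by
    have e : S - T = Pt + Pp := by rw [hPtdef]; abel
    rw [e, Matrix.mul_add, Matrix.trace_add]
  have hG1 := abs_trace_le G Pt
  have hG2 := abs_trace_le G Pp
  have hopG : opNorm G ≤ τ₂ / 2 := by linarith
  have hm1 : opNorm G * nuclearNorm Pt ≤ τ₂ / 2 * nuclearNorm Pt :=
    mul_le_mul_of_nonneg_right hopG (nuclearNorm_nonneg Pt)
  have hm2 : opNorm G * nuclearNorm Pp ≤ τ₂ / 2 * nuclearNorm Pp :=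
    mul_le_mul_of_nonneg_right hopG (nuclearNorm_nonneg Pp)
  have hb1 : -Matrix.trace (Gᵀ * Pt) ≤ τ₂ / 2 * nuclearNorm Pt := by
    have := neg_abs_le (Matrix.trace (Gᵀ * Pt))
    linarith
  have hb2 : -Matrix.trace (Gᵀ * Pp) ≤ τ₂ / 2 * nuclearNorm Pp := by
    have := neg_abs_le (Matrix.trace (Gᵀ * Pp))
    linarith
  have hmulS : τ₂ * (nuclearNorm T + nuclearNorm Pp - nuclearNorm Pt) ≤ τ₂ * nuclearNorm S :=
    mul_le_mul_of_nonneg_left key1 (le_of_lt hτ₂pos)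
  have hf : τ₁ * (sMin A ^ 2 * frob Dd ^ 2) ≤ τ₁ * frob (A * Dd) ^ 2 :=
    mul_le_mul_of_nonneg_left (frob_bound A Dd) hτ₁
  have hfin : τ₂ / 2 * nuclearNorm Pp ≤ 3 * τ₂ / 2 * nuclearNorm Pt
      - τ₁ * (sMin A ^ 2 * frob Dd ^ 2) := by
    rw [htr] at hgradS
    linarith [hmain, hgradS, hb1, hb2, hmulS, hf]
  have hτ₂ne : τ₂ ≠ 0 := ne_of_gt hτ₂pos
  have hcoef : 2 * τ₁ / τ₂ * sMin A ^ 2 * frob Dd ^ 2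
      = 2 / τ₂ * (τ₁ * (sMin A ^ 2 * frob Dd ^ 2)) := by ring
  have h2τ : (0:ℝ) ≤ 2 / τ₂ := by positivity
  have hstep : ∀ x y w : ℝ, τ₂ / 2 * x ≤ 3 * τ₂ / 2 * y - w → x ≤ 3 * y - 2 / τ₂ * w := by
    intro x y w h
    calc x = 2 / τ₂ * (τ₂ / 2 * x) := by field_simp
      _ ≤ 2 / τ₂ * (3 * τ₂ / 2 * y - w) := mul_le_mul_of_nonneg_left h h2τ
      _ = 3 * y - 2 / τ₂ * w := by field_simp
  calc nuclearNorm Pp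
      ≤ 3 * nuclearNorm Pt - 2 / τ₂ * (τ₁ * (sMin A ^ 2 * frob Dd ^ 2)) :=
        hstep _ _ _ hfin
    _ = 3 * nuclearNorm Pt - 2 * τ₁ / τ₂ * sMin A ^ 2 * frob Dd ^ 2 := by rw [hcoef]
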